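/- Let $B \ge 2$ be an integer. Then $\frac{B^B}{B^B - (B-1)^B} < 2 - \frac{1}{B}$, i.e., the optimal randomized competitive ratio for ski rental is strictly better than the optimal deterministic competitive ratio. -/

import Mathlib

/-- The optimal randomized competitive ratio for ski rental is strictly better
than the optimal deterministic competitive ratio `2 - 1/B`. -/
theorem ski_rental_randomized_beats_deterministic (B : ℕ) (hB : 2 ≤ B) :
    (B : ℝ) ^ B / ((B : ℝ) ^ B - ((B : ℝ) - 1) ^ B) < 2 - 1 / (B : ℝ) := by
  set b : ℝ := (B : ℝ) with hb
  have hB2 : (2 : ℝ) ≤ b := by rw [hb]; exact_mod_cast hB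
  have hb1 : (1 : ℝ) ≤ b - 1 := by linarith
  have hbpos : (0 : ℝ) < b := by linarith
  have hb1pos : (0 : ℝ) < b - 1 := by linarith
  -- key: (2b-1)*(b-1)^(B-1) < b^B
  have hkey : (2 * b - 1) * (b - 1) ^ (B - 1) < b ^ B := by
    have hbern : 1 + (B - 1 : ℕ) * (1 / (b - 1)) ≤ (1 + 1 / (b - 1)) ^ (B - 1) := by
      apply one_add_mul_le_pow
      have : 0 < 1 / (b - 1) := by positivity
      linarith
    have hcast : ((B - 1 : ℕ) : ℝ) = b - 1 := by
      have : (1 : ℕ) ≤ B := by omega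
      push_cast [Nat.cast_sub this]
      ring
    have h2 : (2 : ℝ) ≤ (1 + 1 / (b - 1)) ^ (B - 1) := by
      rw [hcast] at hbern
      have : (b - 1) * (1 / (b - 1)) = 1 := by field_simp
      linarith [hbern, this.le]
    have hrw : b ^ B = b * ((1 + 1 / (b - 1)) ^ (B - 1) * (b - 1) ^ (B - 1)) := by
      rw [← mul_pow]
      have : (1 + 1 / (b - 1)) * (b - 1) = b := by field_simp; ring
      rw [this]
      have hBs : B - 1 + 1 = B := by omega
      rw [← pow_succ', hBs]
    rw [hrw]
    have hpowpos : (0 : ℝ) < (b - 1) ^ (B - 1) := by positivity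
    calc (2 * b - 1) * (b - 1) ^ (B - 1) < 2 * b * (b - 1) ^ (B - 1) := by nlinarith
      _ ≤ b * ((1 + 1 / (b - 1)) ^ (B - 1) * (b - 1) ^ (B - 1)) := by
          have := mul_le_mul_of_nonneg_right h2 hpowpos.le
          nlinarith
  have hpow : (b - 1) ^ B < b ^ B := by
    apply pow_lt_pow_left₀ (by linarith) (by linarith)
    omega
  have hden : 0 < b ^ B - (b - 1) ^ B := by linarith
  rw [div_lt_iff₀ hden]
  have hsplit : (b - 1) ^ B = (b - 1) ^ (B - 1) * (b - 1) := by
    rw [← pow_succ]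
    congr 1
    omega
  have h1b : 1 / b ≤ 1 := by
    rw [div_le_one hbpos]; linarith
  have : (2 * b - 1) * (b - 1) ^ B < (b - 1) * b ^ B := by
    rw [hsplit]
    nlinarith [hkey, hb1pos]
  have hexp : (2 - 1 / b) * (b ^ B - (b - 1) ^ B) - b ^ B
      = ((b - 1) * b ^ B - (2 * b - 1) * (b - 1) ^ B) / b := by
    field_simp
    ring
  nlinarith [div_pos (by linarith : (0:ℝ) < (b - 1) * b ^ B - (2 * b - 1) * (b - 1) ^ B) hbpos, hexp]
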